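/- Let n ≥ 2 and d ≥ 4 be integers, and let r be an integer with 0 ≤ r ≤ ⌈(1/(n+1))·C(n+d,n)⌉. Let q be an integer and ε an integer with 0 ≤ ε < n such that n·q + ε = r·(n+1) − C(n+d−1,n). Then C(n+d−2, n) ≤ (r − q − ε)·(n+1). -/
import Mathlib

lemma ch2 (j : ℕ) : (j+2).choose 2 * 2 = (j+2)*(j+1) := by
  refine Nat.eq_of_mul_eq_mul_right (Nat.factorial_pos j) ?_
  have h := Nat.choose_mul_factorial_mul_factorial (show 2 ≤ j+2 by omega)
  have h2 : j + 2 - 2 = j := by omega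
  rw [h2] at h
  calc (j+2).choose 2 * 2 * j.factorial
      = (j+2).choose 2 * (Nat.factorial 2) * j.factorial := by norm_num [Nat.factorial]
    _ = (j+2).factorial := h
    _ = (j+2)*(j+1)*j.factorial := by simp [Nat.factorial_succ]; ring

lemma ch5 (j : ℕ) : (j+5).choose 5 * 120 = (j+5)*(j+4)*(j+3)*(j+2)*(j+1) := by
  refine Nat.eq_of_mul_eq_mul_right (Nat.factorial_pos j) ?_
  have h := Nat.choose_mul_factorial_mul_factorial (show 5 ≤ j+5 by omega)
  have h2 : j + 5 - 5 = j := by omega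
  rw [h2] at h
  calc (j+5).choose 5 * 120 * j.factorial
      = (j+5).choose 5 * (Nat.factorial 5) * j.factorial := by norm_num [Nat.factorial]
    _ = (j+5).factorial := h
    _ = (j+5)*(j+4)*(j+3)*(j+2)*(j+1)*j.factorial := by simp [Nat.factorial_succ]; ring

lemma stepK (m e : ℕ)
    (hside : (m+2)*(m+2)*(m+4) ≤ (m+e+5)*(m+3)*(m+1))
    (hK : (e+4)*(m+e+5)*(m+3)*(m+1) < (m+e+5).choose (m+2)*(m+2)*(e+3)) :
    (e+4)*(m+e+6)*(m+4)*(m+2) < (m+e+6).choose (m+3)*(m+3)*(e+3) := by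
  have hI : (m+e+6) * (m+e+5).choose (m+2) = (m+e+6).choose (m+3) * (m+3) := by
    have := Nat.add_one_mul_choose_eq (m+e+5) (m+2)
    simpa [Nat.succ_eq_add_one] using this
  refine lt_of_mul_lt_mul_right ?_ (Nat.zero_le (m+2))
  have h1 : (e+4)*(m+e+5)*(m+3)*(m+1)*(m+e+6) < (m+e+5).choose (m+2)*(m+2)*(e+3)*(m+e+6) :=
    Nat.mul_lt_mul_of_lt_of_le hK (le_refl _) (by omega)
  have h2 : (m+2)*(m+2)*(m+4)*((e+4)*(m+e+6)) ≤ (m+e+5)*(m+3)*(m+1)*((e+4)*(m+e+6)) :=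
    Nat.mul_le_mul_right _ hside
  have h3 : (m+e+6) * (m+e+5).choose (m+2) * ((m+2)*(e+3)) = (m+e+6).choose (m+3) * (m+3) * ((m+2)*(e+3)) := by
    rw [hI]
  nlinarith [h1, h2, h3]

lemma keyK (m e : ℕ) (h : 1 ≤ e ∨ 3 ≤ m) :
    (e+4) * (m+e+5) * (m+3) * (m+1) < (m+e+5).choose (m+2) * (m+2) * (e+3) := by
  rcases h with he | hm
  · induction m with
    | zero =>
      have h2 : (e+5).choose 2 * 2 = (e+5)*(e+4) := by
        have := ch2 (e+3)
        simpa [show e+3+2 = e+5 by omega, show e+3+1 = e+4 by omega] using this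
      simp only [Nat.zero_add]
      nlinarith [h2, he]
    | succ k ih =>
      have hs : (k+2)*(k+2)*(k+4) ≤ (k+e+5)*(k+3)*(k+1) := by
        calc (k+2)*(k+2)*(k+4) ≤ (k+6)*(k+3)*(k+1) := by nlinarith
          _ ≤ (k+e+5)*(k+3)*(k+1) :=
            Nat.mul_le_mul_right _ (Nat.mul_le_mul_right _ (by omega))
      have hres := stepK k e hs ih
      simpa [show k+1+e+5 = k+e+6 by omega, show k+1+3 = k+4 by omega,
        show k+1+1 = k+2 by omega, show k+1+2 = k+3 by omega] using hres
  · induction m with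
    | zero => omega
    | succ k ih =>
      rcases Nat.lt_or_ge k 3 with hk | hk
      · have hk2 : k = 2 := by omega
        subst hk2
        -- goal: (e+4)*(2+1+e+5)*(2+1+3)*(2+1+1) < (2+1+e+5).choose (2+1+2)*(2+1+2)*(e+3)
        have h5 : (e+8).choose 5 * 120 = (e+8)*(e+7)*(e+6)*(e+5)*(e+4) := by
          have := ch5 (e+3)
          simpa [show e+3+5 = e+8 by omega, show e+3+4 = e+7 by omega,
            show e+3+3 = e+6 by omega, show e+3+2 = e+5 by omega,
            show e+3+1 = e+4 by omega] using this
        have h6 : 576 < (e+7)*(e+6)*(e+5)*(e+3) := by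
          calc (576:ℕ) < 7*6*5*3 := by norm_num
            _ ≤ (e+7)*(e+6)*(e+5)*(e+3) := by gcongr <;> omega
        have h7 : 576 * ((e+4)*(e+8)) < (e+7)*(e+6)*(e+5)*(e+3) * ((e+4)*(e+8)) :=
          Nat.mul_lt_mul_of_lt_of_le h6 (le_refl _) (by positivity)
        have goal24 : (e+4)*(2+1+e+5)*(2+1+3)*(2+1+1)*120 < (2+1+e+5).choose (2+1+2)*(2+1+2)*(e+3)*120 := by
          have e1 : 2+1+e+5 = e+8 := by omega
          have e2 : (2+1+3) = 6 := by norm_num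
          have e3 : (2+1+1) = 4 := by norm_num
          have e4 : (2+1+2) = 5 := by norm_num
          rw [e1, e2, e3, e4]
          have h5e : (e+8).choose 5 * 120 * (e+3) = (e+8)*(e+7)*(e+6)*(e+5)*(e+4)*(e+3) := by
            rw [h5]
          nlinarith [h5e, h7]
        exact lt_of_mul_lt_mul_right goal24 (Nat.zero_le 120)
      · have hs : (k+2)*(k+2)*(k+4) ≤ (k+e+5)*(k+3)*(k+1) := by
          calc (k+2)*(k+2)*(k+4) ≤ (k+5)*(k+3)*(k+1) := by nlinarith
            _ ≤ (k+e+5)*(k+3)*(k+1) :=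
              Nat.mul_le_mul_right _ (Nat.mul_le_mul_right _ (by omega))
        have hres := stepK k e hs (ih (by omega))
        simpa [show k+1+e+5 = k+e+6 by omega, show k+1+3 = k+4 by omega,
          show k+1+1 = k+2 by omega, show k+1+2 = k+3 by omega] using hres

/-- Lemma 2.6(2): `C(n+d−2, n) ≤ (r − q − ε)·(n+1)`. -/
theorem stmt1 (n d : ℕ) (r q ε : ℤ) (hn : 2 ≤ n) (hd : 4 ≤ d)
    (hr0 : 0 ≤ r) (hr : r ≤ ⌈(((n + d).choose n : ℚ)) / ((n : ℚ) + 1)⌉)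
    (hε0 : 0 ≤ ε) (hεn : ε < (n : ℤ))
    (heq : (n : ℤ) * q + ε = r * ((n : ℤ) + 1) - ((n + d - 1).choose n : ℤ)) :
    ((n + d - 2).choose n : ℤ) ≤ (r - q - ε) * ((n : ℤ) + 1) := by
  -- Step 1: r*(n+1) ≤ N + n
  have hpos : (0:ℚ) < (n:ℚ) + 1 := by positivity
  have h1 : (r:ℚ) ≤ ((⌈(((n + d).choose n : ℚ)) / ((n : ℚ) + 1)⌉ : ℤ) : ℚ) := by
    exact_mod_cast hr
  have h2 := Int.ceil_lt_add_one ((((n + d).choose n : ℚ)) / ((n : ℚ) + 1))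
  have h4 : (r:ℚ) < (((n + d).choose n : ℚ)) / ((n : ℚ) + 1) + 1 := lt_of_le_of_lt h1 h2
  have h5 := mul_lt_mul_of_pos_right h4 hpos
  have h6 : ((((n + d).choose n : ℚ)) / ((n : ℚ) + 1) + 1) * ((n:ℚ)+1)
      = (((n + d).choose n : ℚ)) + ((n:ℚ)+1) := by field_simp
  have h7 : (r:ℚ) * ((n:ℚ)+1) < (((n + d).choose n : ℚ)) + ((n:ℚ)+1) := by
    rw [h6] at h5; exact h5
  have hr' : r * ((n:ℤ)+1) < ((n + d).choose n : ℤ) + ((n:ℤ)+1) := by exact_mod_cast h7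
  clear h1 h2 h4 h5 h6 h7 hr hpos
  by_cases hsp : (n = 2 ∨ n = 3 ∨ n = 4) ∧ d = 4
  · obtain ⟨h1, rfl⟩ := hsp
    rcases h1 with rfl | rfl | rfl
    · rw [show Nat.choose (2+4) 2 = 15 from by decide] at hr'
      rw [show Nat.choose (2+4-1) 2 = 10 from by decide] at heq
      rw [show Nat.choose (2+4-2) 2 = 6 from by decide]
      push_cast at hr' heq hεn ⊢
      omega
    · rw [show Nat.choose (3+4) 3 = 35 from by decide] at hr'
      rw [show Nat.choose (3+4-1) 3 = 20 from by decide] at heq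
      rw [show Nat.choose (3+4-2) 3 = 10 from by decide]
      push_cast at hr' heq hεn ⊢
      omega
    · rw [show Nat.choose (4+4) 4 = 70 from by decide] at hr'
      rw [show Nat.choose (4+4-1) 4 = 35 from by decide] at heq
      rw [show Nat.choose (4+4-2) 4 = 15 from by decide]
      push_cast at hr' heq hεn ⊢
      omega
  · obtain ⟨m, rfl⟩ : ∃ m, n = m + 2 := ⟨n - 2, by omega⟩
    obtain ⟨e, rfl⟩ : ∃ e, d = e + 4 := ⟨d - 4, by omega⟩
    have hme : 1 ≤ e ∨ 3 ≤ m := by omega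
    rw [show m + 2 + (e + 4) - 2 = m + e + 4 from by omega]
    rw [show m + 2 + (e + 4) - 1 = m + e + 5 from by omega] at heq
    rw [show m + 2 + (e + 4) = m + e + 6 from by omega] at hr'
    have idB : ((m+e+4).choose (m+2) : ℤ) * ((m:ℤ)+e+5)
        = ((m+e+5).choose (m+2) : ℤ) * ((e:ℤ)+3) := by
      have h := Nat.choose_mul_succ_eq (m+e+4) (m+2)
      rw [show m+e+4+1 - (m+2) = e+3 from by omega] at h
      rw [show m+e+4+1 = m+e+5 from by omega] at h
      exact_mod_cast h
    have idN : ((m+e+5).choose (m+2) : ℤ) * ((m:ℤ)+e+6)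
        = ((m+e+6).choose (m+2) : ℤ) * ((e:ℤ)+4) := by
      have h := Nat.choose_mul_succ_eq (m+e+5) (m+2)
      rw [show m+e+5+1 - (m+2) = e+4 from by omega] at h
      rw [show m+e+5+1 = m+e+6 from by omega] at h
      exact_mod_cast h
    have hK : ((e:ℤ)+4) * ((m:ℤ)+e+5) * ((m:ℤ)+3) * ((m:ℤ)+1)
        < ((m+e+5).choose (m+2) : ℤ) * ((m:ℤ)+2) * ((e:ℤ)+3) := by
      exact_mod_cast keyK m e hme
    push_cast at heq hr' hεn ⊢
    set A : ℤ := ((m+e+5).choose (m+2) : ℤ) with hA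
    set B : ℤ := ((m+e+4).choose (m+2) : ℤ) with hB
    set N : ℤ := ((m+e+6).choose (m+2) : ℤ) with hN
    have hD : ((e:ℤ)+4) * ((m:ℤ)+e+5) * ( ((m:ℤ)+3) * A - ((m:ℤ)+2) * B - N )
        = A * ((m:ℤ)+2) * ((m:ℤ)+1) * ((e:ℤ)+3) := by
      linear_combination (-(((e:ℤ)+4) * ((m:ℤ)+2))) * idB + ((m:ℤ)+e+5) * idN
    have hkpos : (0:ℤ) < A*((m:ℤ)+2)*((e:ℤ)+3) - ((e:ℤ)+4)*((m:ℤ)+e+5)*((m:ℤ)+3)*((m:ℤ)+1) := by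
      linarith [hK]
    have hmul := mul_pos hkpos (show (0:ℤ) < (m:ℤ)+1 by positivity)
    have h8 : ((e:ℤ)+4)*((m:ℤ)+e+5)
        * ( ((m:ℤ)+3)*A - ((m:ℤ)+2)*B - N - ((m:ℤ)+3)*((m:ℤ)+1)^2 ) > 0 := by
      linarith [hmul, hD]
    have hDpos : (0:ℤ) < ((e:ℤ)+4)*((m:ℤ)+e+5) := by positivity
    have hY : (0:ℤ) < ((m:ℤ)+3)*A - ((m:ℤ)+2)*B - N - ((m:ℤ)+3)*((m:ℤ)+1)^2 := by
      rcases mul_pos_iff.mp h8 with ⟨_, hY⟩ | ⟨hD', _⟩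
      · exact hY
      · linarith
    have hΦ : ((m:ℤ)+3)*A - ((m:ℤ)+2)*B - N ≥ ((m:ℤ)+3)*((m:ℤ)+1)^2 + 1 := by
      have := Int.lt_iff_add_one_le.mp hY
      linarith
    have hlin : ((m:ℤ)+2) * ((r - q - ε) * ((m:ℤ)+3) - B)
        = (A - r - ((m:ℤ)+1)*ε)*((m:ℤ)+3) - ((m:ℤ)+2)*B := by
      linear_combination (-(((m:ℤ)+3))) * heq
    have hεle : ε ≤ (m:ℤ)+1 := by linarith
    have hterm : ((m:ℤ)+3)*((m:ℤ)+1)*ε ≤ ((m:ℤ)+3)*((m:ℤ)+1)*((m:ℤ)+1) :=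
      mul_le_mul_of_nonneg_left hεle (by positivity)
    have h9 : (A - r - ((m:ℤ)+1)*ε)*((m:ℤ)+3) - ((m:ℤ)+2)*B > -((m:ℤ)+2) := by
      linarith [hΦ, hr', hterm]
    have hfin : ((m:ℤ)+2) * (-1) < ((m:ℤ)+2) * ((r - q - ε) * ((m:ℤ)+3) - B) := by
      rw [hlin]; linarith
    have hG : (-1:ℤ) < (r - q - ε) * ((m:ℤ)+3) - B :=
      lt_of_mul_lt_mul_left hfin (by positivity)
    have h10 := Int.lt_iff_add_one_le.mp hG
    linarith
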